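/- Let d ≥ 5 and consider the lattice with L² = 2d, L·N_i = 0, N_i·N_j = -2δ_{ij}. Let E = aL + Σ_{i=1}^8 b_iN_i with a ∈ (1/2)ℤ, a ≥ 1/2 (and a ∈ ℤ if d is odd), b_i ∈ (1/2)ℤ, b_i ≤ 0. If E·(L - N̂) = 2 with N̂ = (N_1+...+N_8)/2, then E² < 0; in particular there is no such class with E² = 0. -/
import Mathlib


/-- Non-hyperellipticity computation: for `L² = 2d ≥ 10`, any class
    `E = aL + Σ bᵢNᵢ` with `a, bᵢ ∈ ½ℤ` (`a ∈ ℤ` if `d` is odd), `a ≥ ½`,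
    `bᵢ ≤ 0` and `E·(L - N̂) = 2` has `E² < 0`; in particular no such `E`
    has `E² = 0`. -/
theorem no_hyperelliptic_class (d : ℤ) (hd : 5 ≤ d)
    (a : ℚ) (b : Fin 8 → ℚ)
    (ha2 : ∃ a' : ℤ, a = (a' : ℚ) / 2)
    (haodd : Odd d → ∃ a'' : ℤ, a = (a'' : ℚ))
    (ha : 1/2 ≤ a)
    (hb2 : ∀ i, ∃ m : ℤ, b i = (m : ℚ) / 2) (hb : ∀ i, b i ≤ 0)
    (hE : 2 * d * a + ∑ i, b i = 2) :
    2 * d * a ^ 2 - 2 * ∑ i, (b i) ^ 2 < 0 ∧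
    ¬(2 * d * a ^ 2 - 2 * ∑ i, (b i) ^ 2 = 0) := by
  have hdq : (5 : ℚ) ≤ (d : ℚ) := by exact_mod_cast hd
  -- Cauchy–Schwarz: (∑ b)² ≤ 8 ∑ b²
  have hCS : (∑ i, b i) ^ 2 ≤ 8 * ∑ i, (b i) ^ 2 := by
    have := sq_sum_le_card_mul_sum_sq (s := (Finset.univ : Finset (Fin 8))) (f := b)
    simpa using this
  -- key quadratic positivity: d(d-2)a² - 2da + 1 > 0
  have hkey : 0 < (d : ℚ) * ((d : ℚ) - 2) * a ^ 2 - 2 * d * a + 1 := by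
    rcases Int.even_or_odd d with hev | hodd
    · -- d even, d ≥ 5 ⇒ d ≥ 6
      have hd6 : 6 ≤ d := by
        rcases hev with ⟨k, hk⟩; omega
      have hd6q : (6 : ℚ) ≤ (d : ℚ) := by exact_mod_cast hd6
      nlinarith [sq_nonneg (2 * a - 1), mul_nonneg (sub_nonneg.2 hd6q) (by linarith : (0:ℚ) ≤ 2 * a - 1), sq_nonneg a]
    · obtain ⟨a'', haa⟩ := haodd hodd
      have h1 : (1 : ℤ) ≤ a'' := by
        have : (0 : ℚ) < (a'' : ℚ) := by rw [haa] at ha; linarith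
        exact_mod_cast this
      have ha1 : (1 : ℚ) ≤ a := by rw [haa]; exact_mod_cast h1
      nlinarith [mul_nonneg (by linarith : (0:ℚ) ≤ (d:ℚ) - 5) (by linarith : (0:ℚ) ≤ a - 1), sq_nonneg (a - 1), mul_nonneg (by linarith : (0:ℚ) ≤ (d:ℚ) - 5) (sq_nonneg a)]
  have hS : (∑ i, b i) = 2 - 2 * d * a := by linarith
  have hmain : 2 * d * a ^ 2 - 2 * ∑ i, (b i) ^ 2 < 0 := by
    rw [hS] at hCS
    nlinarith [hkey]
  exact ⟨hmain, by intro h; rw [h] at hmain; exact lt_irrefl 0 hmain⟩
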